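/- Let X be a metric space and G a group acting on X by isometries such that there is a compact subset K of X with G·K = X, and such that the action is metrically proper: for every r > 0, the set {g ∈ G : g·K^{+r} ∩ K^{+r} ≠ ∅} is finite. Assume G is residually finite. Let Y ⊆ X and let Stab(Y) = {g ∈ G : gY = Y}. Then for every ρ > 0 there exists a finite-index normal subgroup H of Stab(Y) such that for every h ∈ H with h ≠ 1 and every x ∈ X, d(x, h·x) ≥ ρ; that is, the injectivity radius of H on X, inf over nontrivial h ∈ H of inf over x ∈ X of d(x, hx), is at least ρ. -/

import Mathlib

open Pointwise

/-- The `r`-neighbourhood `K^{+r}` of a subset. -/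
def nbhd {X : Type*} [MetricSpace X] (r : ℝ) (K : Set X) : Set X :=
  {x | ∃ k ∈ K, dist x k ≤ r}

/-- if a residually finite group `G` acts by isometries on `X`,
cocompactly (`G·K = X` with `K` compact) and metrically properly, then for
every `ρ > 0` the stabilizer of any subset `Y` has a finite-index normal
subgroup all of whose nontrivial elements move every point by at least `ρ`. -/
theorem exists_finiteIndex_normal_subgroup_large_injectivity_radius
    {X : Type*} [MetricSpace X] {G : Type*} [Group G] [MulAction G X]
    (hiso : ∀ g : G, Isometry (fun x : X => g • x))
    (K : Set X) (hK : IsCompact K) (hKcov : (⋃ g : G, g • K) = Set.univ)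
    (hproper : ∀ r > (0 : ℝ),
      Set.Finite {g : G | (g • nbhd r K) ∩ nbhd r K ≠ ∅})
    (hresfin : ∀ g : G, g ≠ 1 →
      ∃ N : Subgroup G, N.Normal ∧ N.FiniteIndex ∧ g ∉ N)
    (Y : Set X) (ρ : ℝ) (hρ : 0 < ρ) :
    ∃ H : Subgroup ↥(MulAction.stabilizer G Y), H.Normal ∧ H.FiniteIndex ∧
      ∀ h : ↥(MulAction.stabilizer G Y), h ∈ H → (h : G) ≠ 1 →
        ∀ x : X, ρ ≤ dist x ((h : G) • x) := by
  classical
  set S : Set G := {g : G | (g • nbhd ρ K) ∩ nbhd ρ K ≠ ∅} with hS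
  have hSfin : S.Finite := hproper ρ hρ
  have hchoice : ∀ g : G, ∃ N : Subgroup G, N.Normal ∧ N.FiniteIndex ∧ (g ≠ 1 → g ∉ N) := by
    intro g
    by_cases hg : g = 1
    · exact ⟨⊤, inferInstance, inferInstance, fun h => absurd hg h⟩
    · obtain ⟨N, h1, h2, h3⟩ := hresfin g hg
      exact ⟨N, h1, h2, fun _ => h3⟩
  choose N hN1 hN2 hN3 using hchoice
  haveI : Finite ↥S := hSfin.to_subtype
  set M : Subgroup G := ⨅ g : S, N g with hM
  have hMmem : ∀ {x : G}, x ∈ M ↔ ∀ g : S, x ∈ N g := by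
    intro x; simp [hM, Subgroup.mem_iInf]
  have hMnormal : M.Normal := by
    constructor
    intro n hn g
    rw [hMmem] at hn ⊢
    intro i
    exact (hN1 i).conj_mem n (hn i) g
  haveI hMfin : M.FiniteIndex := Subgroup.finiteIndex_iInf fun i => hN2 i
  -- key claim
  have key : ∀ h : G, h ∈ M → h ≠ 1 → ∀ x : X, ρ ≤ dist x (h • x) := by
    intro h hhM hh1 x
    by_contra hlt
    push_neg at hlt
    have hx : x ∈ ⋃ g : G, g • K := hKcov ▸ Set.mem_univ x
    obtain ⟨_, ⟨g₀, rfl⟩, k, hkK, rfl⟩ := hx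
    set g' : G := g₀⁻¹ * h * g₀ with hg'
    have hdist : dist k (g' • k) < ρ := by
      have : dist (g₀ • k) (g₀ • g' • k) = dist k (g' • k) := (hiso g₀).dist_eq k (g' • k)
      rw [← this]
      have : g₀ • g' • k = h • g₀ • k := by
        simp [hg', mul_smul]
      rw [this]
      exact hlt
    have hg'ne : g' ≠ 1 := by
      simp only [hg', ne_eq]
      intro hc
      apply hh1
      have := congrArg (fun z => g₀ * z * g₀⁻¹) hc
      simpa [mul_assoc] using this
    have hkmem : k ∈ nbhd ρ K := ⟨k, hkK, by simp [hρ.le]⟩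
    have hg'S : g' ∈ S := by
      rw [hS, Set.mem_setOf_eq, ← Set.nonempty_iff_ne_empty]
      exact ⟨g' • k, ⟨k, hkmem, rfl⟩, ⟨k, hkK, by rw [dist_comm]; exact hdist.le⟩⟩
    have hg'M : g' ∈ M := by
      have := hMnormal.conj_mem h hhM g₀⁻¹
      simpa [hg', mul_assoc] using this
    exact hN3 g' hg'ne ((hMmem.mp hg'M) ⟨g', hg'S⟩)
  -- pull back to the stabilizer
  refine ⟨M.comap (MulAction.stabilizer G Y).subtype, hMnormal.comap _, ?_, ?_⟩
  · constructor
    rw [Subgroup.index_comap]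
    intro hc
    have hdvd := Subgroup.relIndex_dvd_index_of_normal M (MulAction.stabilizer G Y).subtype.range
    rw [hc] at hdvd
    exact hMfin.index_ne_zero (zero_dvd_iff.mp hdvd)
  · intro h hh hne x
    exact key h (by simpa [Subgroup.mem_comap, Subgroup.mem_subgroupOf] using hh) hne x
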